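/- Let v : [0,T] → [0,∞) be continuous with v(T') ≤ v(0) + c ∫_0^{T'} max{1, v(t)³} dt for all T' ∈ [0,T], where c > 0. Then for all t ≤ T_loc := (1/(4c)) min{1, v(0)^{−2}}, one has v(t) ≤ √2 · max{1, v(0)}. -/

import Mathlib

open MeasureTheory
open Set Topology Filter

lemma phi_deriv (c N x : ℝ) (hg : 0 < 1 - 2*c*N^2*x) :
    HasDerivAt (fun s => N / Real.sqrt (1 - 2*c*N^2*s))
      (c * (N / Real.sqrt (1 - 2*c*N^2*x))^3) x := by
  have hgd : HasDerivAt (fun s : ℝ => 1 - 2*c*N^2*s) (-(2*c*N^2)) x := by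
    simpa using ((hasDerivAt_id x).const_mul (2*c*N^2)).const_sub 1
  have hsq : HasDerivAt (fun s => Real.sqrt (1 - 2*c*N^2*s))
      (-(2*c*N^2) / (2 * Real.sqrt (1 - 2*c*N^2*x))) x := hgd.sqrt (ne_of_gt hg)
  have hs0 : 0 < Real.sqrt (1 - 2*c*N^2*x) := Real.sqrt_pos.2 hg
  have h := (hasDerivAt_const x N).div hsq (ne_of_gt hs0)
  convert h using 1 <;> try rfl
  have hsg : Real.sqrt (1 - 2*c*N^2*x) ^ 2 = 1 - 2*c*N^2*x := Real.sq_sqrt hg.le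
  have h3 : Real.sqrt (1 - 2*c*N^2*x) ^ 3 = (1 - 2*c*N^2*x) * Real.sqrt (1 - 2*c*N^2*x) := by
    rw [pow_succ, hsg]
  field_simp
  try rw [h3]
  ring

lemma comp_lemma (T c : ℝ) (hc : 0 < c) (v : ℝ → ℝ)
    (hcont : ContinuousOn v (Set.Icc 0 T))
    (hnn : ∀ t ∈ Set.Icc 0 T, 0 ≤ v t)
    (hineq : ∀ T' ∈ Set.Icc 0 T,
      v T' ≤ v 0 + c * ∫ t in (0:ℝ)..T', max 1 ((v t) ^ 3))
    (N : ℝ) (hN1 : 1 ≤ N) (hv0 : v 0 < N)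
    (t₁ : ℝ) (ht₁T : t₁ ∈ Set.Icc 0 T) (hlt : 2*c*N^2*t₁ < 1) :
    ∀ s ∈ Set.Icc 0 t₁, v s < N / Real.sqrt (1 - 2*c*N^2*s) := by
  obtain ⟨ht₁0, ht₁T'⟩ := ht₁T
  set φ : ℝ → ℝ := fun s => N / Real.sqrt (1 - 2*c*N^2*s) with hφ
  have hcN : 0 ≤ 2*c*N^2 := by positivity
  have hgpos : ∀ s ∈ Icc 0 t₁, 0 < 1 - 2*c*N^2*s := by
    intro s hs
    have : 2*c*N^2*s ≤ 2*c*N^2*t₁ := mul_le_mul_of_nonneg_left hs.2 hcN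
    linarith
  have hN0 : 0 < N := lt_of_lt_of_le one_pos hN1
  -- φ ≥ N on [0,t₁]
  have hφge : ∀ s ∈ Icc 0 t₁, N ≤ φ s := by
    intro s hs
    have hg := hgpos s hs
    have hgle : 1 - 2*c*N^2*s ≤ 1 := by
      have : 0 ≤ 2*c*N^2*s := mul_nonneg hcN hs.1
      linarith
    have hsq : Real.sqrt (1 - 2*c*N^2*s) ≤ 1 := by
      have := Real.sqrt_le_sqrt hgle
      simpa using this
    have hsqpos : 0 < Real.sqrt (1 - 2*c*N^2*s) := Real.sqrt_pos.2 hg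
    rw [hφ, le_div_iff₀ hsqpos]
    nlinarith
  -- φ continuous on [0,t₁]
  have hφcont : ContinuousOn φ (Icc 0 t₁) := by
    apply ContinuousOn.div continuousOn_const
    · exact (Real.continuous_sqrt.comp (by continuity)).continuousOn
    · intro s hs
      exact ne_of_gt (Real.sqrt_pos.2 (hgpos s hs))
  have hvcont : ContinuousOn v (Icc 0 t₁) := hcont.mono (Icc_subset_Icc le_rfl ht₁T')
  -- FTC : for s ∈ [0,t₁], φ s = N + c * ∫₀ˢ φ³
  have hFTC : ∀ s ∈ Icc 0 t₁, φ s = N + c * ∫ r in (0:ℝ)..s, (φ r)^3 := by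
    intro s hs
    have huIcc : uIcc 0 s = Icc 0 s := uIcc_of_le hs.1
    have hderiv : ∀ x ∈ uIcc 0 s, HasDerivAt φ (c * (φ x)^3) x := by
      intro x hx
      rw [huIcc] at hx
      exact phi_deriv c N x (hgpos x ⟨hx.1, le_trans hx.2 hs.2⟩)
    have hint : IntervalIntegrable (fun x => c * (φ x)^3) volume 0 s := by
      apply ContinuousOn.intervalIntegrable
      rw [huIcc]
      exact (continuousOn_const.mul (((hφcont.mono (Icc_subset_Icc le_rfl hs.2))).pow 3))
    have := intervalIntegral.integral_eq_sub_of_hasDerivAt hderiv hint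
    rw [intervalIntegral.integral_const_mul] at this
    have hφ0 : φ 0 = N := by simp [hφ]
    rw [hφ0] at this
    linarith
  -- main comparison by contradiction
  by_contra hcon
  push_neg at hcon
  obtain ⟨s₀, hs₀, hs₀ge⟩ := hcon
  set B : Set ℝ := Icc 0 t₁ ∩ {s | φ s ≤ v s} with hB
  have hBne : B.Nonempty := ⟨s₀, hs₀, hs₀ge⟩
  have hBclosed : IsClosed B := by
    have : B = Icc 0 t₁ ∩ (fun s => v s - φ s) ⁻¹' (Ici 0) := by
      ext x; simp [hB, sub_nonneg]
    rw [this]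
    exact (hvcont.sub hφcont).preimage_isClosed_of_isClosed isClosed_Icc isClosed_Ici
  have hBbdd : BddBelow B := ⟨0, fun x hx => hx.1.1⟩
  set ts := sInf B with hts
  have htsB : ts ∈ B := hBclosed.csInf_mem hBne hBbdd
  have htsIcc : ts ∈ Icc 0 t₁ := htsB.1
  have htsge : φ ts ≤ v ts := htsB.2
  have hlt_ts : ∀ r ∈ Icc 0 t₁, r < ts → v r < φ r := by
    intro r hr hrts
    by_contra h
    push_neg at h
    exact absurd (csInf_le hBbdd ⟨hr, h⟩) (not_le.2 hrts)
  have hts0 : 0 < ts := by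
    rcases htsIcc.1.lt_or_eq with h | h
    · exact h
    · exfalso
      have : φ 0 = N := by simp [hφ]
      rw [← h, this] at htsge
      exact absurd htsge (not_le.2 hv0)
  -- v ≤ φ on [0, ts]
  have hle : ∀ r ∈ Icc 0 ts, v r ≤ φ r := by
    intro r hr
    rcases hr.2.lt_or_eq with h | h
    · exact (hlt_ts r ⟨hr.1, le_trans hr.2 htsIcc.2⟩ h).le
    · -- r = ts : limit from the left
      rw [h]
      by_contra hcc
      push_neg at hcc
      have hw : ContinuousWithinAt (fun s => v s - φ s) (Icc 0 t₁) ts :=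
        (hvcont.sub hφcont) ts htsIcc
      have hpos : 0 < v ts - φ ts := sub_pos.2 hcc
      have hev : ∀ᶠ x in 𝓝[Icc 0 t₁] ts, 0 < v x - φ x :=
        hw.eventually_const_lt hpos
      have hne : (𝓝[Ico 0 ts] ts).NeBot := right_nhdsWithin_Ico_neBot hts0
      have hsub : 𝓝[Ico 0 ts] ts ≤ 𝓝[Icc 0 t₁] ts :=
        nhdsWithin_mono ts (fun x hx => ⟨hx.1, le_trans hx.2.le htsIcc.2⟩)
      have hev2 : ∀ᶠ x in 𝓝[Ico 0 ts] ts, 0 < v x - φ x := hev.filter_mono hsub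
      obtain ⟨x, hx, hxmem⟩ := (hev2.and (eventually_mem_nhdsWithin)).exists
      have hxlt := hlt_ts x ⟨hxmem.1, le_trans hxmem.2.le htsIcc.2⟩ hxmem.2
      linarith
  -- integral comparison
  have hsubT : Icc 0 ts ⊆ Icc 0 T := Icc_subset_Icc le_rfl (le_trans htsIcc.2 ht₁T')
  have hsubt₁ : Icc 0 ts ⊆ Icc 0 t₁ := Icc_subset_Icc le_rfl htsIcc.2
  have huIcc : uIcc 0 ts = Icc 0 ts := uIcc_of_le htsIcc.1
  have hint1 : IntervalIntegrable (fun r => max 1 ((v r)^3)) volume 0 ts := by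
    apply ContinuousOn.intervalIntegrable
    rw [huIcc]
    exact ContinuousOn.sup continuousOn_const ((hcont.mono hsubT).pow 3)
  have hint2 : IntervalIntegrable (fun r => (φ r)^3) volume 0 ts := by
    apply ContinuousOn.intervalIntegrable
    rw [huIcc]
    exact (hφcont.mono hsubt₁).pow 3
  have hmono : ∫ r in (0:ℝ)..ts, max 1 ((v r)^3) ≤ ∫ r in (0:ℝ)..ts, (φ r)^3 := by
    apply intervalIntegral.integral_mono_on htsIcc.1 hint1 hint2
    intro x hx
    have hφx := hφge x (hsubt₁ hx)
    have hφ1 : 1 ≤ φ x := le_trans hN1 hφx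
    have h1 : (1:ℝ) ≤ (φ x)^3 := one_le_pow₀ hφ1
    have h2 : (v x)^3 ≤ (φ x)^3 :=
      pow_le_pow_left₀ (hnn x (hsubT hx)) (hle x hx) 3
    exact max_le h1 h2
  have hvts := hineq ts ⟨htsIcc.1, le_trans htsIcc.2 ht₁T'⟩
  have hφts := hFTC ts htsIcc
  have : v ts < φ ts := by
    calc v ts ≤ v 0 + c * ∫ r in (0:ℝ)..ts, max 1 ((v r)^3) := hvts
    _ ≤ v 0 + c * ∫ r in (0:ℝ)..ts, (φ r)^3 := by
        have := mul_le_mul_of_nonneg_left hmono hc.le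
        linarith
    _ < N + c * ∫ r in (0:ℝ)..ts, (φ r)^3 := by linarith
    _ = φ ts := hφts.symm
  linarith


/-- Nonlinear Grönwall lemma with cubic nonlinearity: if
`v(T') ≤ v(0) + c∫₀^{T'} max{1, v³}`, then `v(t) ≤ √2 max{1, v(0)}`
for `t ≤ (1/(4c)) min{1, v(0)⁻²}`. -/
theorem stmt10 (T c : ℝ) (hT : 0 < T) (hc : 0 < c) (v : ℝ → ℝ)
    (hcont : ContinuousOn v (Set.Icc 0 T))
    (hnn : ∀ t ∈ Set.Icc 0 T, 0 ≤ v t)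
    (hineq : ∀ T' ∈ Set.Icc 0 T,
      v T' ≤ v 0 + c * ∫ t in (0:ℝ)..T', max 1 ((v t) ^ 3)) :
    ∀ t ∈ Set.Icc 0 T, t ≤ (1 / (4 * c)) * min 1 ((v 0) ^ 2)⁻¹ →
      v t ≤ Real.sqrt 2 * max 1 (v 0) := by
  intro t ht hloc
  set M : ℝ := max 1 (v 0) with hM
  have hM1 : (1:ℝ) ≤ M := le_max_left _ _
  have hM0 : 0 < M := lt_of_lt_of_le one_pos hM1
  have hv0nn : 0 ≤ v 0 := hnn 0 ⟨le_rfl, hT.le⟩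
  have hv0M : v 0 ≤ M := le_max_right _ _
  -- key : 2*c*M^2*t ≤ 1/2
  have hkey : 2*c*M^2*t ≤ 1/2 := by
    have hmin : min 1 ((v 0)^2)⁻¹ ≤ (M^2)⁻¹ := by
      rcases le_total (v 0) 1 with h | h
      · have : M = 1 := max_eq_left h
        rw [this]
        simpa using min_le_left 1 ((v 0)^2)⁻¹
      · have : M = v 0 := max_eq_right h
        rw [this]
        exact min_le_right _ _
    have ht' : t ≤ 1/(4*c) * (M^2)⁻¹ := le_trans hloc (by
      apply mul_le_mul_of_nonneg_left hmin
      positivity)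
    have : 2*c*M^2*t ≤ 2*c*M^2*(1/(4*c) * (M^2)⁻¹) :=
      mul_le_mul_of_nonneg_left ht' (by positivity)
    calc 2*c*M^2*t ≤ 2*c*M^2*(1/(4*c) * (M^2)⁻¹) := this
    _ = 1/2 := by field_simp; ring
  have ht0 : 0 ≤ t := ht.1
  -- v t ≤ (M+ε)/sqrt(1 - 2c(M+ε)²t) for small positive ε
  set F : ℝ → ℝ := fun ε => (M+ε) / Real.sqrt (1 - 2*c*(M+ε)^2*t) with hF
  have hevsmall : ∀ᶠ ε in 𝓝[>] (0:ℝ), 2*c*(M+ε)^2*t < 1 := by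
    have hcont2 : ContinuousAt (fun ε : ℝ => 2*c*(M+ε)^2*t) 0 := by fun_prop
    have h0 : (2:ℝ)*c*(M+0)^2*t < 1 := by rw [add_zero]; linarith
    have := hcont2.eventually_lt_const h0
    exact nhdsWithin_le_nhds this
  have hevle : ∀ᶠ ε in 𝓝[>] (0:ℝ), v t ≤ F ε := by
    filter_upwards [hevsmall, self_mem_nhdsWithin] with ε hsm (hεpos : 0 < ε)
    have hN1 : 1 ≤ M + ε := by linarith
    have hv0N : v 0 < M + ε := by linarith
    exact (comp_lemma T c hc v hcont hnn hineq (M+ε) hN1 hv0N t ht hsm t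
      ⟨ht0, le_rfl⟩).le
  have hFt : Filter.Tendsto F (𝓝[>] (0:ℝ)) (𝓝 (F 0)) := by
    have h1 : (0:ℝ) < 1 - 2*c*(M+0)^2*t := by rw [add_zero]; linarith
    have : ContinuousAt F 0 := by
      apply ContinuousAt.div
      · fun_prop
      · exact (Real.continuous_sqrt.continuousAt).comp (by fun_prop)
      · exact ne_of_gt (Real.sqrt_pos.2 h1)
    exact this.continuousWithinAt.tendsto
  have hvF0 : v t ≤ F 0 := ge_of_tendsto hFt hevle
  -- F 0 ≤ √2 * M
  have hfin : F 0 ≤ Real.sqrt 2 * M := by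
    have hg : (1:ℝ)/2 ≤ 1 - 2*c*(M+0)^2*t := by rw [add_zero]; linarith
    have hsq : Real.sqrt (1/2) ≤ Real.sqrt (1 - 2*c*(M+0)^2*t) := Real.sqrt_le_sqrt hg
    have hsqpos : 0 < Real.sqrt (1/2) := Real.sqrt_pos.2 (by norm_num)
    have hdiv : F 0 ≤ (M+0) / Real.sqrt (1/2) := by
      rw [hF]
      exact div_le_div_of_nonneg_left (by linarith) hsqpos hsq
    have h12 : Real.sqrt (1/2) = (Real.sqrt 2)⁻¹ := by
      rw [show (1:ℝ)/2 = 2⁻¹ by norm_num, Real.sqrt_inv]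
    have hs2 : 0 < Real.sqrt 2 := Real.sqrt_pos.2 (by norm_num)
    calc F 0 ≤ (M+0) / Real.sqrt (1/2) := hdiv
    _ = M * Real.sqrt 2 := by rw [h12, add_zero, div_eq_mul_inv, inv_inv]
    _ = Real.sqrt 2 * M := mul_comm _ _
  exact le_trans hvF0 hfin
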